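/- Let k ≥ 1, J = [[0, I_k], [−I_k, 0]] ∈ M_{2k}(ℝ), and G_ℂ = { A ∈ GL_{2k}(ℝ) : A·J = J·A }. Then an invertible matrix B ∈ GL_{2k}(ℝ) lies in the normalizer N(G_ℂ) of G_ℂ in GL_{2k}(ℝ) if and only if B·J = J·B or B·J = −J·B. -/

import Mathlib

open Matrix

/-- The standard complex structure matrix `J = [[0, I], [-I, 0]]`. -/
def symplJ (k : ℕ) : Matrix (Fin k ⊕ Fin k) (Fin k ⊕ Fin k) ℝ :=
  Matrix.fromBlocks 0 1 (-1) 0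

/-- The image `G_ℂ = { A ∈ GL_{2k}(ℝ) : A·J = J·A }` of `GL_k(ℂ)` under its
standard real embedding, as a subgroup of `GL_{2k}(ℝ)`. -/
def GLC (k : ℕ) : Subgroup (GL (Fin k ⊕ Fin k) ℝ) where
  carrier := {A | (A : Matrix (Fin k ⊕ Fin k) (Fin k ⊕ Fin k) ℝ) * symplJ k =
    symplJ k * (A : Matrix (Fin k ⊕ Fin k) (Fin k ⊕ Fin k) ℝ)}
  one_mem' := by simp
  mul_mem' := by
    intro a b ha hb
    simp only [Set.mem_setOf_eq] at *
    set M := (a : Matrix (Fin k ⊕ Fin k) (Fin k ⊕ Fin k) ℝ)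
    set N := (b : Matrix (Fin k ⊕ Fin k) (Fin k ⊕ Fin k) ℝ)
    have : ((a * b : GL (Fin k ⊕ Fin k) ℝ) : Matrix (Fin k ⊕ Fin k) (Fin k ⊕ Fin k) ℝ)
        = M * N := rfl
    rw [this, mul_assoc, hb, ← mul_assoc, ha, mul_assoc]
  inv_mem' := by
    intro a ha
    simp only [Set.mem_setOf_eq] at *
    set M := (a : Matrix (Fin k ⊕ Fin k) (Fin k ⊕ Fin k) ℝ)
    set N := ((a⁻¹ : GL (Fin k ⊕ Fin k) ℝ) : Matrix (Fin k ⊕ Fin k) (Fin k ⊕ Fin k) ℝ)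
    have hMN : M * N = 1 := a.mul_inv
    have hNM : N * M = 1 := a.inv_mul
    calc N * symplJ k = N * symplJ k * (M * N) := by rw [hMN, mul_one]
      _ = N * (symplJ k * M) * N := by noncomm_ring
      _ = N * (M * symplJ k) * N := by rw [ha]
      _ = (N * M) * (symplJ k * N) := by noncomm_ring
      _ = symplJ k * N := by rw [hNM, one_mul]


section NormalizerAux

variable {k : ℕ}

local notation "Mat" => Matrix (Fin k ⊕ Fin k) (Fin k ⊕ Fin k) ℝ

lemma symplJ_sq (k : ℕ) : symplJ k * symplJ k = -1 := by
  have : (-1 : Matrix (Fin k ⊕ Fin k) (Fin k ⊕ Fin k) ℝ) = Matrix.fromBlocks (-1) 0 0 (-1) := by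
    rw [← Matrix.fromBlocks_one, Matrix.fromBlocks_neg]; simp
  rw [this, symplJ, Matrix.fromBlocks_multiply]
  simp

lemma diag_comm_symplJ (M : Matrix (Fin k) (Fin k) ℝ) :
    Matrix.fromBlocks M 0 0 M * symplJ k = symplJ k * Matrix.fromBlocks M 0 0 M := by
  simp [symplJ, Matrix.fromBlocks_multiply]

/-- A block-diagonal unit `diag(M,M)` from an invertible `M`. -/
def diagGL (M N : Matrix (Fin k) (Fin k) ℝ) (h1 : M * N = 1) (h2 : N * M = 1) :
    GL (Fin k ⊕ Fin k) ℝ where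
  val := Matrix.fromBlocks M 0 0 M
  inv := Matrix.fromBlocks N 0 0 N
  val_inv := by rw [Matrix.fromBlocks_multiply, ← Matrix.fromBlocks_one]; simp [h1]
  inv_val := by rw [Matrix.fromBlocks_multiply, ← Matrix.fromBlocks_one]; simp [h2]

lemma unipotent_inv {i j : Fin k} (h : i ≠ j) :
    (1 + Matrix.single i j (1:ℝ)) * (1 - Matrix.single i j (1:ℝ)) = 1 ∧
    (1 - Matrix.single i j (1:ℝ)) * (1 + Matrix.single i j (1:ℝ)) = 1 := by
  have hsq : Matrix.single i j (1:ℝ) * Matrix.single i j (1:ℝ) = 0 := by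
    have := Ne.symm h; simp [Matrix.single_mul_single_of_ne, this]
  set E := Matrix.single i j (1:ℝ)
  have h1 : (1 + E) * (1 - E) = 1 - E * E := by noncomm_ring
  have h2 : (1 - E) * (1 + E) = 1 - E * E := by noncomm_ring
  rw [h1, h2, hsq, sub_zero]; exact ⟨rfl, rfl⟩

lemma mem_GLC_iff (g : GL (Fin k ⊕ Fin k) ℝ) :
    g ∈ GLC k ↔ (g : Mat) * symplJ k = symplJ k * (g : Mat) := Iff.rfl

lemma inv_comm_J (C : GL (Fin k ⊕ Fin k) ℝ) (ε : ℝ) (hε : ε * ε = 1)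
    (hC : (C : Mat) * symplJ k = ε • (symplJ k * (C : Mat))) :
    ((C⁻¹ : GL (Fin k ⊕ Fin k) ℝ) : Mat) * symplJ k =
      ε • (symplJ k * ((C⁻¹ : GL (Fin k ⊕ Fin k) ℝ) : Mat)) := by
  set J := symplJ k
  set Cm := (C : Mat)
  set Ci := ((C⁻¹ : GL (Fin k ⊕ Fin k) ℝ) : Mat)
  have hCC : Cm * Ci = 1 := C.mul_inv
  have hCC' : Ci * Cm = 1 := C.inv_mul
  have h1 : J * Ci = ε • (Ci * J) := by
    calc J * Ci = (Ci * Cm) * J * Ci := by rw [hCC', one_mul]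
      _ = Ci * (Cm * J) * Ci := by noncomm_ring
      _ = Ci * (ε • (J * Cm)) * Ci := by rw [hC]
      _ = ε • (Ci * J * (Cm * Ci)) := by
          rw [mul_smul_comm, smul_mul_assoc]; noncomm_ring
      _ = ε • (Ci * J) := by rw [hCC, mul_one]
  calc Ci * J = ε • (ε • (Ci * J)) := by rw [smul_smul, hε, one_smul]
    _ = ε • (J * Ci) := by rw [← h1]

lemma conj_comm_J (C : GL (Fin k ⊕ Fin k) ℝ) (ε : ℝ) (hε : ε * ε = 1)
    (hC : (C : Mat) * symplJ k = ε • (symplJ k * (C : Mat)))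
    (g : GL (Fin k ⊕ Fin k) ℝ) (hg : (g : Mat) * symplJ k = symplJ k * (g : Mat)) :
    ((C * g * C⁻¹ : GL (Fin k ⊕ Fin k) ℝ) : Mat) * symplJ k =
      symplJ k * ((C * g * C⁻¹ : GL (Fin k ⊕ Fin k) ℝ) : Mat) := by
  set J := symplJ k
  set Cm := (C : Mat)
  set Ci := ((C⁻¹ : GL (Fin k ⊕ Fin k) ℝ) : Mat)
  have hCC : Cm * Ci = 1 := C.mul_inv
  have hCC' : Ci * Cm = 1 := C.inv_mul
  have hCi : Ci * J = ε • (J * Ci) := by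
    have h1 : J * Ci = ε • (Ci * J) := by
      calc J * Ci = (Ci * Cm) * J * Ci := by rw [hCC', one_mul]
        _ = Ci * (Cm * J) * Ci := by noncomm_ring
        _ = Ci * (ε • (J * Cm)) * Ci := by rw [hC]
        _ = ε • (Ci * J * (Cm * Ci)) := by
            rw [mul_smul_comm, smul_mul_assoc]; noncomm_ring
        _ = ε • (Ci * J) := by rw [hCC, mul_one]
    calc Ci * J = ε • (ε • (Ci * J)) := by rw [smul_smul, hε, one_smul]
      _ = ε • (J * Ci) := by rw [← h1]
  have hval : ((C * g * C⁻¹ : GL (Fin k ⊕ Fin k) ℝ) : Mat) = Cm * (g : Mat) * Ci := rfl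
  rw [hval]
  calc Cm * (g : Mat) * Ci * J = Cm * (g : Mat) * (ε • (J * Ci)) := by rw [mul_assoc, hCi]
    _ = ε • (Cm * ((g : Mat) * J) * Ci) := by rw [mul_smul_comm]; noncomm_ring
    _ = ε • (Cm * J * ((g : Mat) * Ci)) := by rw [hg]; noncomm_ring
    _ = ε • ((ε • (J * Cm)) * ((g : Mat) * Ci)) := by rw [hC]
    _ = (ε * ε) • (J * (Cm * (g : Mat) * Ci)) := by
        rw [smul_mul_assoc, smul_smul]; noncomm_ring
    _ = J * (Cm * (g : Mat) * Ci) := by rw [hε, one_smul]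

end NormalizerAux

/-- Characterization of the normalizer of `G_ℂ = GL_k(ℂ)` in `GL_{2k}(ℝ)`
(paper's Lemma 6.1): `B ∈ N(G_ℂ)` iff `B·J = J·B` or `B·J = -J·B`. -/
theorem mem_normalizer_GLC_iff (k : ℕ) (hk : 1 ≤ k) (B : GL (Fin k ⊕ Fin k) ℝ) :
    B ∈ Subgroup.normalizer ((GLC k : Set (GL (Fin k ⊕ Fin k) ℝ))) ↔
      (B : Matrix (Fin k ⊕ Fin k) (Fin k ⊕ Fin k) ℝ) * symplJ k =
          symplJ k * (B : Matrix (Fin k ⊕ Fin k) (Fin k ⊕ Fin k) ℝ) ∨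
        (B : Matrix (Fin k ⊕ Fin k) (Fin k ⊕ Fin k) ℝ) * symplJ k =
          -(symplJ k * (B : Matrix (Fin k ⊕ Fin k) (Fin k ⊕ Fin k) ℝ)) := by
  set J := symplJ k with hJdef
  set Bm := (B : Matrix (Fin k ⊕ Fin k) (Fin k ⊕ Fin k) ℝ) with hBm
  set Bi := ((B⁻¹ : GL (Fin k ⊕ Fin k) ℝ) : Matrix (Fin k ⊕ Fin k) (Fin k ⊕ Fin k) ℝ) with hBi
  have hBB : Bm * Bi = 1 := B.mul_inv
  have hBB' : Bi * Bm = 1 := B.inv_mul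
  constructor
  · intro hB
    have hnorm := Subgroup.mem_normalizer_iff.mp hB
    -- J as a unit
    have hJu1 : J * (-J) = 1 := by rw [mul_neg, symplJ_sq]; simp
    have hJu2 : (-J) * J = 1 := by rw [neg_mul, symplJ_sq]; simp
    set Ju : GL (Fin k ⊕ Fin k) ℝ := ⟨J, -J, hJu1, hJu2⟩ with hJu
    have hJmem : Ju ∈ GLC k := rfl
    set K := Bm * J * Bi with hK
    have hKJ : K * J = J * K := (hnorm Ju).mp hJmem
    have hKcomm : ∀ g : GL (Fin k ⊕ Fin k) ℝ, g ∈ GLC k →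
        (g : Matrix (Fin k ⊕ Fin k) (Fin k ⊕ Fin k) ℝ) * K =
          K * (g : Matrix (Fin k ⊕ Fin k) (Fin k ⊕ Fin k) ℝ) := by
      intro g hg
      have h2 : B⁻¹ * g * B ∈ GLC k := by
        refine (hnorm (B⁻¹ * g * B)).mpr ?_
        have : B * (B⁻¹ * g * B) * B⁻¹ = g := by group
        rw [this]; exact hg
      have hX : (Bi * (g : Matrix (Fin k ⊕ Fin k) (Fin k ⊕ Fin k) ℝ) * Bm) * J
          = J * (Bi * (g : Matrix (Fin k ⊕ Fin k) (Fin k ⊕ Fin k) ℝ) * Bm) := h2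
      set gm := (g : Matrix (Fin k ⊕ Fin k) (Fin k ⊕ Fin k) ℝ)
      set X := Bi * gm * Bm with hXdef
      have hgm : gm = Bm * X * Bi := by
        rw [hXdef, show Bm * (Bi * gm * Bm) * Bi = (Bm * Bi) * gm * (Bm * Bi) by noncomm_ring,
          hBB, one_mul, mul_one]
      calc gm * K = (Bm * X * Bi) * (Bm * J * Bi) := by rw [← hgm, hK]
        _ = Bm * X * (Bi * Bm) * J * Bi := by noncomm_ring
        _ = Bm * (X * J) * Bi := by rw [hBB']; noncomm_ring
        _ = Bm * (J * X) * Bi := by rw [hX]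
        _ = (Bm * J * Bi) * gm * (Bm * Bi) := by rw [hXdef]; noncomm_ring
        _ = (Bm * J * Bi) * gm := by rw [hBB, mul_one]
        _ = K * gm := by rw [hK]
    -- blocks of K
    set K1 := K.toBlocks₁₁ with hK1
    set K2 := K.toBlocks₁₂ with hK2
    set K3 := K.toBlocks₂₁ with hK3
    set K4 := K.toBlocks₂₂ with hK4
    have hKb : K = Matrix.fromBlocks K1 K2 K3 K4 := (Matrix.fromBlocks_toBlocks K).symm
    -- K1, K2 commute with all Matrix.single i j 1 for i ≠ j
    have hcomm : ∀ i j : Fin k, i ≠ j →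
        Matrix.single i j (1:ℝ) * K1 = K1 * Matrix.single i j (1:ℝ) ∧
        Matrix.single i j (1:ℝ) * K2 = K2 * Matrix.single i j (1:ℝ) := by
      intro i j hij
      set E := Matrix.single i j (1:ℝ) with hE
      set U : GL (Fin k ⊕ Fin k) ℝ :=
        diagGL (1 + E) (1 - E) (unipotent_inv hij).1 (unipotent_inv hij).2 with hU
      have hUmem : U ∈ GLC k := diag_comm_symplJ (1 + E)
      have := hKcomm U hUmem
      have hUval : (U : Matrix (Fin k ⊕ Fin k) (Fin k ⊕ Fin k) ℝ)
          = Matrix.fromBlocks (1 + E) 0 0 (1 + E) := rfl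
      rw [hUval, hKb, Matrix.fromBlocks_multiply, Matrix.fromBlocks_multiply] at this
      simp only [Matrix.zero_mul, Matrix.mul_zero, add_zero, zero_add] at this
      have h11 : (1 + E) * K1 = K1 * (1 + E) := (Matrix.fromBlocks_inj.mp this).1
      have h12 : (1 + E) * K2 = K2 * (1 + E) := (Matrix.fromBlocks_inj.mp this).2.1
      constructor
      · have := h11; rw [add_mul, mul_add, one_mul, mul_one] at this
        exact add_left_cancel this
      · have := h12; rw [add_mul, mul_add, one_mul, mul_one] at this
        exact add_left_cancel this
    obtain ⟨a, ha⟩ := Matrix.mem_range_scalar_of_commute_single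
      (fun i j hij => (hcomm i j hij).1)
    obtain ⟨b, hb⟩ := Matrix.mem_range_scalar_of_commute_single
      (fun i j hij => (hcomm i j hij).2)
    -- relations from K commuting with J
    have hJb : J = Matrix.fromBlocks 0 1 (-1) 0 := rfl
    have hKJ' := hKJ
    rw [hKb, hJb, Matrix.fromBlocks_multiply, Matrix.fromBlocks_multiply] at hKJ'
    simp only [Matrix.mul_zero, Matrix.zero_mul, Matrix.mul_one, Matrix.one_mul,
      Matrix.mul_neg, Matrix.neg_mul, add_zero, zero_add, mul_neg_one, neg_one_mul] at hKJ'
    obtain ⟨e1, e2, e3, e4⟩ := Matrix.fromBlocks_inj.mp hKJ'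
    -- e1 : -K2 = K3, e2 : K1 = K4
    -- K squared is -1
    have hKsq : K * K = -1 := by
      calc K * K = Bm * J * (Bi * Bm) * J * Bi := by rw [hK]; noncomm_ring
        _ = Bm * (J * J) * Bi := by rw [hBB']; noncomm_ring
        _ = Bm * (-1) * Bi := by rw [symplJ_sq]
        _ = -(Bm * Bi) := by noncomm_ring
        _ = -1 := by rw [hBB]
    have hKform : K = Matrix.fromBlocks K1 K2 (-K2) K1 := by
      rw [hKb, ← e1, ← e2]
    have hneg1 : (-1 : Matrix (Fin k ⊕ Fin k) (Fin k ⊕ Fin k) ℝ)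
        = Matrix.fromBlocks (-1) 0 0 (-1) := by
      rw [← Matrix.fromBlocks_one, Matrix.fromBlocks_neg]; simp
    rw [hKform, Matrix.fromBlocks_multiply, hneg1] at hKsq
    obtain ⟨f1, f2, _, _⟩ := Matrix.fromBlocks_inj.mp hKsq
    -- f1 : K1*K1 + K2*(-K2) = -1, f2 : K1*K2 + K2*K1 = 0
    haveI : Nonempty (Fin k) := ⟨⟨0, hk⟩⟩
    rw [← ha, ← hb] at f1 f2
    rw [Matrix.mul_neg, ← _root_.map_mul, ← _root_.map_mul, ← sub_eq_add_neg,
      ← _root_.map_sub,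
      show (-1 : Matrix (Fin k) (Fin k) ℝ) = Matrix.scalar (Fin k) (-1) by
        ext i j; by_cases h : i = j <;>
          simp [Matrix.scalar_apply, Matrix.diagonal_apply, Matrix.one_apply, h]] at f1
    rw [← _root_.map_mul, ← _root_.map_mul, ← _root_.map_add,
      show (0 : Matrix (Fin k) (Fin k) ℝ) = Matrix.scalar (Fin k) 0 by simp] at f2
    have g1 : a * a - b * b = -1 := Matrix.scalar_inj.mp f1
    have g2 : a * b + b * a = 0 := Matrix.scalar_inj.mp f2
    have hab : a = 0 := by nlinarith [sq_nonneg a, sq_nonneg b, sq_nonneg (a*b)]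
    have hb2 : b * b = 1 := by nlinarith
    have hbval : b = 1 ∨ b = -1 := mul_self_eq_one_iff.mp hb2
    have hs1 : K1 = 0 := by rw [← ha, hab, map_zero]
    have hs2 : K2 = b • 1 := by
      rw [← hb]; ext x y
      by_cases hxy : x = y <;>
        simp [Matrix.scalar_apply, Matrix.diagonal_apply, Matrix.one_apply, hxy]
    have hKval : K = b • J := by
      rw [hKform, hs1, hs2, hJb, Matrix.fromBlocks_smul, smul_zero, smul_neg]
    -- conclude
    have hfinal : Bm * J = b • (J * Bm) := by
      calc Bm * J = Bm * J * (Bi * Bm) := by rw [hBB', mul_one]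
        _ = K * Bm := by rw [hK]; noncomm_ring
        _ = b • (J * Bm) := by rw [hKval, smul_mul_assoc]
    rcases hbval with h | h
    · left; rw [hfinal, h, one_smul]
    · right; rw [hfinal, h, neg_smul, one_smul]
  · intro hB
    have hε : ∃ ε : ℝ, ε * ε = 1 ∧ Bm * J = ε • (J * Bm) := by
      rcases hB with h | h
      · exact ⟨1, by norm_num, by rw [h, one_smul]⟩
      · exact ⟨-1, by norm_num, by rw [h, neg_smul, one_smul]⟩
    obtain ⟨ε, hε1, hε2⟩ := hε
    have hBiJ : Bi * J = ε • (J * Bi) := inv_comm_J B ε hε1 hε2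
    rw [Subgroup.mem_normalizer_iff]
    intro g
    constructor
    · intro hg
      exact conj_comm_J B ε hε1 hε2 g hg
    · intro hg
      have h3 := conj_comm_J B⁻¹ ε hε1 hBiJ (B * g * B⁻¹) hg
      have h4 : B⁻¹ * (B * g * B⁻¹) * (B⁻¹)⁻¹ = g := by group
      rw [h4] at h3
      exact h3
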